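/- Let M be a finitely generated ℤⁿ-graded R-module that is positively g-determined. Then Hdepth M = max{ depth 𝔇(𝔓) : 𝔓 is a Hilbert partition of H_M(X)_{⪯g} }. In particular, there exists a Hilbert partition 𝔓 : H_M(X)_{⪯g} = Σ_{i=1}^r Q[aⁱ,bⁱ](X) such that Hdepth M = min{ρ(bⁱ) : i = 1,…,r}. -/

import Mathlib

open MvPolynomial

/-!  Setting: `R = K[X₁,…,Xₙ]` with the `ℤⁿ`-grading `deg Xᵢ = eᵢ`.  A multigraded
`R`-module is a module `M` over `MvPolynomial (Fin n) K` together with a family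
`gr : (Fin n → ℤ) → Submodule K M` of `K`-subspaces forming a direct sum
decomposition of `M` (the class `DirectSum.Decomposition gr`) which is compatible
with the `R`-action (`GradedSMul gr`). -/

variable {K : Type*} [Field K] {n : ℕ} {M : Type*} [AddCommGroup M] [Module K M]
  [Module (MvPolynomial (Fin n) K) M] [IsScalarTower K (MvPolynomial (Fin n) K) M]

/-- The grading is compatible with the `R`-module structure:
multiplication by `Xᵢ` maps `M_a` into `M_{a+eᵢ}`. -/
def GradedSMul (gr : (Fin n → ℤ) → Submodule K M) : Prop :=
  ∀ (i : Fin n) (a : Fin n → ℤ), ∀ x ∈ gr a,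
    (MvPolynomial.X i : MvPolynomial (Fin n) K) • x ∈ gr (a + Pi.single i 1)

/-- `M` is positively `g`-determined: `M_a = 0` unless `a ∈ ℕⁿ`, and the
multiplication map `·Xᵢ : M_a → M_{a+eᵢ}` is bijective whenever `aᵢ ≥ gᵢ`. -/
def PosDetermined (gr : (Fin n → ℤ) → Submodule K M) (g : Fin n → ℤ) : Prop :=
  (∀ a : Fin n → ℤ, ¬ (0 : Fin n → ℤ) ≤ a → gr a = ⊥) ∧
  ∀ (i : Fin n) (a : Fin n → ℤ), g i ≤ a i →
    (∀ x ∈ gr a, (MvPolynomial.X i : MvPolynomial (Fin n) K) • x = 0 → x = 0) ∧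
    (∀ y ∈ gr (a + Pi.single i 1), ∃ x ∈ gr a,
      (MvPolynomial.X i : MvPolynomial (Fin n) K) • x = y)

/-- A Hilbert partition `𝔓 : H_M(X)_{⪯g} = Σᵢ Q[aⁱ,bⁱ](X)`: the intervals satisfy
`0 ⪯ aⁱ ⪯ bⁱ ⪯ g` and, in each degree `0 ⪯ c ⪯ g`, the coefficient
`dim_K M_c` of `H_M(X)_{⪯g}` equals the number of `i` with `aⁱ ⪯ c ⪯ bⁱ`. -/
def IsHilbertPartition (gr : (Fin n → ℤ) → Submodule K M) (g : Fin n → ℤ)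
    {r : ℕ} (a b : Fin r → Fin n → ℤ) : Prop :=
  (∀ i, (0 : Fin n → ℤ) ≤ a i ∧ a i ≤ b i ∧ b i ≤ g) ∧
  ∀ c : Fin n → ℤ, (0 : Fin n → ℤ) ≤ c → c ≤ g →
    Module.rank K ↥(gr c) =
      (((Finset.univ : Finset (Fin r)).filter
        fun i => (∀ j, a i j ≤ c j) ∧ (∀ j, c j ≤ b i j)).card : Cardinal)

/-- `𝓖[a,b] = {c ∈ [a,b] : c_j = a_j for all j with b_j = g_j}`. -/
noncomputable def Gset {n : ℕ} (g a b : Fin n → ℤ) : Finset (Fin n → ℤ) :=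
  (Finset.Icc a b).filter fun c => ∀ j, b j = g j → c j = a j

/-- `Z_b = {j : b_j = g_j}`. -/
def Zset {n : ℕ} (g b : Fin n → ℤ) : Finset (Fin n) :=
  Finset.univ.filter fun j => b j = g j

/-- `ρ(b) = |Z_b|`. -/
def rho {n : ℕ} (g b : Fin n → ℤ) : ℕ := (Zset g b).card

/-- A Hilbert decomposition `M ≅ ⊕_{i∈I} K[Zᵢ](−sᵢ)` as multigraded `K`-vector
spaces: in each degree `c ∈ ℤⁿ`, `dim_K M_c` equals the number of indices `i`
with `sᵢ ⪯ c` and `c_j = (sᵢ)_j` for all `j ∉ Zᵢ`. -/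
def IsHilbertDecomp (gr : (Fin n → ℤ) → Submodule K M)
    {ι : Type*} [Fintype ι] (Z : ι → Finset (Fin n)) (s : ι → Fin n → ℤ) : Prop :=
  ∀ c : Fin n → ℤ, Module.rank K ↥(gr c) =
    (((Finset.univ : Finset ι).filter
      fun i => (∀ j, s i j ≤ c j) ∧ (∀ j, j ∉ Z i → c j = s i j)).card : Cardinal)

/-- The Hilbert depth of `M`: the maximum of the depths `min_i |Zᵢ|` over all
Hilbert decompositions `M ≅ ⊕_{i∈I} K[Zᵢ](−sᵢ)` of `M` (indexed by nonempty
finite index sets `Fin (k+1)`). -/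
noncomputable def hdepth (gr : (Fin n → ℤ) → Submodule K M) : ℕ :=
  sSup {d | ∃ (k : ℕ) (Z : Fin (k + 1) → Finset (Fin n)) (s : Fin (k + 1) → Fin n → ℤ),
    IsHilbertDecomp gr Z s ∧
      d = Finset.univ.inf' Finset.univ_nonempty fun i => (Z i).card}

lemma rank_step (gr : (Fin n → ℤ) → Submodule K M) (hsmul : GradedSMul gr)
    {g : Fin n → ℤ} (hM : PosDetermined gr g) (i : Fin n) (a : Fin n → ℤ)
    (h : g i ≤ a i) :
    Module.rank K (gr a) = Module.rank K (gr (a + Pi.single i 1)) := by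
  let f : gr a →ₗ[K] gr (a + Pi.single i 1) :=
  { toFun := fun x => ⟨(X i : MvPolynomial (Fin n) K) • (x : M), hsmul i a x x.2⟩
    map_add' := fun x y => by ext; simp [smul_add]
    map_smul' := fun k x => Subtype.ext (by
      simp only [SetLike.val_smul, RingHom.id_apply]
      exact smul_comm _ _ _) }
  have hinj : Function.Injective f := by
    rw [← LinearMap.ker_eq_bot, eq_bot_iff]
    intro x hx
    have hx' : f x = 0 := hx
    have hz : (X i : MvPolynomial (Fin n) K) • (x : M) = 0 := congrArg Subtype.val hx'
    have := (hM.2 i a h).1 x x.2 hz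
    simp [Subtype.ext_iff, this]
  have hsurj : Function.Surjective f := by
    rintro ⟨y, hy⟩
    obtain ⟨x, hx, hxy⟩ := (hM.2 i a h).2 y hy
    exact ⟨⟨x, hx⟩, Subtype.ext hxy⟩
  exact (LinearEquiv.ofBijective f ⟨hinj, hsurj⟩).rank_eq

lemma rank_inf_aux (gr : (Fin n → ℤ) → Submodule K M) (hsmul : GradedSMul gr)
    {g : Fin n → ℤ} (hg : (0 : Fin n → ℤ) ≤ g) (hM : PosDetermined gr g) :
    ∀ (N : ℕ) (e : Fin n → ℤ), (0 : Fin n → ℤ) ≤ e →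
      (∑ j, (e j - e j ⊓ g j).toNat) ≤ N →
      Module.rank K (gr (e ⊓ g)) = Module.rank K (gr e) := by
  intro N
  induction N with
  | zero =>
    intro e he hN
    have : ∀ j, e j ⊓ g j = e j := by
      intro j
      have := Finset.sum_eq_zero_iff.1 (Nat.le_zero.1 hN) j (Finset.mem_univ j)
      omega
    have he2 : e ⊓ g = e := funext fun j => by simpa [Pi.inf_apply] using this j
    rw [he2]
  | succ N ih =>
    intro e he hN
    by_cases h0 : (∑ j, (e j - e j ⊓ g j).toNat) = 0
    · have : ∀ j, e j ⊓ g j = e j := by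
        intro j
        have := Finset.sum_eq_zero_iff.1 h0 j (Finset.mem_univ j)
        omega
      have he2 : e ⊓ g = e := funext fun j => by simpa [Pi.inf_apply] using this j
      rw [he2]
    · obtain ⟨j, hj⟩ : ∃ j, (e j - e j ⊓ g j).toNat ≠ 0 := by
        by_contra hc
        push_neg at hc
        exact h0 (Finset.sum_eq_zero fun j _ => hc j)
      have hgj : g j < e j := by omega
      set e₂ : Fin n → ℤ := e - Pi.single j 1 with he₂
      have hee : e₂ + Pi.single j 1 = e := by ext k; simp [e₂]
      have he₂j : ∀ k, e₂ k = if k = j then e k - 1 else e k := by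
        intro k
        by_cases hk : k = j <;> simp [e₂, hk, Pi.single_apply]
      have h02 : (0 : Fin n → ℤ) ≤ e₂ := by
        intro k
        show (0 : ℤ) ≤ e₂ k
        have hek : (0 : ℤ) ≤ e k := he k
        have hgk : (0 : ℤ) ≤ g k := hg k
        rw [he₂j k]
        split <;> rename_i hk
        · subst hk; omega
        · exact hek
      have hstep : Module.rank K (gr e₂) = Module.rank K (gr e) := by
        have := rank_step gr hsmul hM j e₂ (by rw [he₂j j, if_pos rfl]; omega)
        rwa [hee] at this
      have hinf : e₂ ⊓ g = e ⊓ g := by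
        ext k
        rw [Pi.inf_apply, Pi.inf_apply, he₂j k]
        split <;> rename_i hk
        · subst hk; omega
        · rfl
      have hmeas : (∑ k, (e₂ k - e₂ k ⊓ g k).toNat) ≤ N := by
        have hle2 : ∀ k ∈ Finset.univ, (e₂ k - e₂ k ⊓ g k).toNat ≤ (e k - e k ⊓ g k).toNat := by
          intro k _
          rw [he₂j k]
          split <;> rename_i hk
          · subst hk; omega
          · omega
        have hltj : (e₂ j - e₂ j ⊓ g j).toNat < (e j - e j ⊓ g j).toNat := by
          rw [he₂j j, if_pos rfl]; omega
        have := Finset.sum_lt_sum hle2 ⟨j, Finset.mem_univ j, hltj⟩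
        omega
      rw [← hstep, ← hinf]
      exact ih e₂ h02 hmeas

lemma pow_smul_mem (gr : (Fin n → ℤ) → Submodule K M) (hsmul : GradedSMul gr) (b : ℕ) :
    ∀ (j : Fin n) (a : Fin n → ℤ) (x : M), x ∈ gr a →
      ((X j : MvPolynomial (Fin n) K) ^ b) • x ∈ gr (a + fun k => if k = j then (b : ℤ) else 0) := by
  induction b with
  | zero =>
    intro j a x hx
    have : (a + fun k => if k = j then ((0:ℕ) : ℤ) else 0) = a := by
      funext k; simp
    rw [this, pow_zero, one_smul]
    exact hx
  | succ b ih =>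
    intro j a x hx
    have h1 : ((X j : MvPolynomial (Fin n) K) ^ (b+1)) • x
        = (X j : MvPolynomial (Fin n) K) • (((X j : MvPolynomial (Fin n) K) ^ b) • x) := by
      rw [pow_succ, mul_comm, mul_smul]
    rw [h1]
    have h2 := hsmul j _ _ (ih j a x hx)
    have h3 : ((a + fun k => if k = j then (b:ℤ) else 0) + Pi.single j 1)
        = a + fun k => if k = j then ((b+1:ℕ):ℤ) else 0 := by
      funext k
      by_cases hk : k = j <;> simp [Pi.single_apply, hk] <;> push_cast <;> ring
    rwa [h3] at h2

lemma monomial_smul_mem (gr : (Fin n → ℤ) → Submodule K M) (hsmul : GradedSMul gr) (u : Fin n →₀ ℕ) :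
    ∀ (a : Fin n → ℤ) (x : M), x ∈ gr a →
      ((monomial u (1:K) : MvPolynomial (Fin n) K)) • x ∈ gr (a + fun j => (u j : ℤ)) := by
  induction u using Finsupp.induction with
  | zero =>
    intro a x hx
    have : (a + fun j => (((0 : Fin n →₀ ℕ) j : ℤ))) = a := by funext k; simp
    rw [this]
    have : (monomial (0 : Fin n →₀ ℕ) (1:K) : MvPolynomial (Fin n) K) = 1 := by
      simp [monomial_zero']
    rw [this, one_smul]; exact hx
  | single_add j b f hjf hb ih =>
    intro a x hx
    have hmul : (monomial (Finsupp.single j b + f) (1:K) : MvPolynomial (Fin n) K)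
        = (X j ^ b) * monomial f 1 := by
      rw [X_pow_eq_monomial, monomial_mul, one_mul]
    rw [hmul, mul_smul]
    have h2 := pow_smul_mem gr hsmul b j _ _ (ih a x hx)
    have h3 : ((a + fun k => (f k : ℤ)) + fun k => if k = j then (b:ℤ) else 0)
        = a + fun k => (((Finsupp.single j b + f) k : ℤ)) := by
      have hfj : f j = 0 := Finsupp.notMem_support_iff.1 hjf
      funext k
      by_cases hk : k = j
      · subst hk
        simp [Finsupp.add_apply, Finsupp.single_apply, hfj]
      · simp only [Pi.add_apply, Finsupp.add_apply, Finsupp.single_apply,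
          if_neg hk, if_neg (fun h : j = k => hk h.symm)]
        push_cast
        ring
    rwa [h3] at h2

noncomputable def projG (gr : (Fin n → ℤ) → Submodule K M) [DirectSum.Decomposition gr]
    (c : Fin n → ℤ) : M →ₗ[K] M :=
  (gr c).subtype ∘ₗ (DFinsupp.lapply c) ∘ₗ (DirectSum.decomposeLinearEquiv gr).toLinearMap

lemma projG_apply (gr : (Fin n → ℤ) → Submodule K M) [DirectSum.Decomposition gr]
    (c : Fin n → ℤ) (x : M) : projG gr c x = ↑(DirectSum.decompose gr x c) := by
  simp [projG, DirectSum.decomposeLinearEquiv_apply, DFinsupp.lapply]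

lemma projG_same (gr : (Fin n → ℤ) → Submodule K M) [DirectSum.Decomposition gr]
    {c : Fin n → ℤ} {x : M} (hx : x ∈ gr c) : projG gr c x = x := by
  rw [projG_apply]; exact DirectSum.decompose_of_mem_same gr hx

lemma projG_ne (gr : (Fin n → ℤ) → Submodule K M) [DirectSum.Decomposition gr]
    {c d : Fin n → ℤ} {x : M} (hx : x ∈ gr d) (h : d ≠ c) : projG gr c x = 0 := by
  rw [projG_apply]; exact DirectSum.decompose_of_mem_ne gr hx h

/-- the (at most one point) set of candidates -/
def candSet (gr : (Fin n → ℤ) → Submodule K M) (c d : Fin n → ℤ) (y : M) : Set M :=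
  {z : M | ∃ u : Fin n →₀ ℕ, (d + fun j => (u j : ℤ)) = c ∧
    z = ((monomial u (1:K)) : MvPolynomial (Fin n) K) • y}

lemma candSet_finite (gr : (Fin n → ℤ) → Submodule K M) (c d : Fin n → ℤ) (y : M) :
    (candSet gr c d y).Finite := by
  apply Set.Subsingleton.finite
  rintro z1 ⟨u1, hu1, rfl⟩ z2 ⟨u2, hu2, rfl⟩
  have : u1 = u2 := by
    ext j
    have h1 := congrFun hu1 j
    have h2 := congrFun hu2 j
    simp only [Pi.add_apply] at h1 h2
    omega
  rw [this]

lemma projG_smul_mem_span (gr : (Fin n → ℤ) → Submodule K M) [DirectSum.Decomposition gr]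
    (hsmul : GradedSMul gr) (c d : Fin n → ℤ) (y : M) (hy : y ∈ gr d)
    (p : MvPolynomial (Fin n) K) :
    projG gr c (p • y) ∈ Submodule.span K (candSet gr c d y) := by
  have hp : p • y = ∑ u ∈ p.support, coeff u p • (((monomial u (1:K)) : MvPolynomial (Fin n) K) • y) := by
    conv_lhs => rw [← support_sum_monomial_coeff p]
    rw [Finset.sum_smul]
    refine Finset.sum_congr rfl fun u _ => ?_
    rw [← smul_assoc, smul_eq_C_mul, C_mul_monomial, mul_one]
  rw [hp, map_sum]
  refine Submodule.sum_mem _ fun u _ => ?_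
  rw [LinearMap.map_smul]
  refine Submodule.smul_mem _ _ ?_
  by_cases hdu : (d + fun j => ((u j : ℤ))) = c
  · rw [projG_same gr (hdu ▸ monomial_smul_mem gr hsmul u d y hy)]
    exact Submodule.subset_span ⟨u, hdu, rfl⟩
  · rw [projG_ne gr (monomial_smul_mem gr hsmul u d y hy) hdu]
    exact Submodule.zero_mem _

lemma finiteDim_gr (gr : (Fin n → ℤ) → Submodule K M) [DirectSum.Decomposition gr]
    (hsmul : GradedSMul gr) [Module.Finite (MvPolynomial (Fin n) K) M]
    (c : Fin n → ℤ) : FiniteDimensional K (gr c) := by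
  classical
  obtain ⟨t, ht⟩ : ∃ t : Finset M, Submodule.span (MvPolynomial (Fin n) K) (↑t : Set M) = ⊤ :=
    Module.finite_def.mp ‹_›
  set T : Set M := ⋃ m ∈ (t : Set M), ⋃ d ∈ (DFinsupp.support (DirectSum.decompose gr m) : Set (Fin n → ℤ)),
      candSet gr c d ↑(DirectSum.decompose gr m d) with hTdef
  have hTfin : T.Finite := by
    apply Set.Finite.biUnion t.finite_toSet
    intro m _
    apply Set.Finite.biUnion (Finset.finite_toSet _)
    intro d _
    exact candSet_finite gr c d _
  have hle : gr c ≤ Submodule.span K T := by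
    intro x hx
    have hxs : x ∈ Submodule.span (MvPolynomial (Fin n) K) (↑t : Set M) := by
      rw [ht]; trivial
    obtain ⟨f, -, hf⟩ := Submodule.mem_span_finset.1 hxs
    rw [← projG_same gr hx, ← hf, map_sum]
    refine Submodule.sum_mem _ fun m hm => ?_
    have hm' : (m : M) = ∑ d ∈ DFinsupp.support (DirectSum.decompose gr m),
        ↑(DirectSum.decompose gr m d) := (DirectSum.sum_support_decompose gr m).symm
    rw [show f m • m = ∑ d ∈ DFinsupp.support (DirectSum.decompose gr m),
        f m • (↑(DirectSum.decompose gr m d) : M) by rw [← Finset.smul_sum, ← hm'], map_sum]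
    refine Submodule.sum_mem _ fun d hd => ?_
    refine Submodule.span_mono ?_ (projG_smul_mem_span gr hsmul c d _ (DirectSum.decompose gr m d).2 (f m))
    intro z hz
    exact Set.mem_biUnion hm (Set.mem_biUnion hd hz)
  have : FiniteDimensional K (Submodule.span K T) := FiniteDimensional.span_of_finite K hTfin
  exact Submodule.finiteDimensional_of_le hle
section helpers
variable {α β : Type*} [Fintype α] [Fintype β]

lemma filter_card_equiv (eqv : α ≃ β) (p : β → Prop) [DecidablePred p]
    [DecidablePred fun x => p (eqv x)] :
    ((Finset.univ : Finset α).filter fun x => p (eqv x)).card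
      = ((Finset.univ : Finset β).filter p).card := by
  apply Finset.card_bij (fun x _ => eqv x)
  · intro x hx; simp only [Finset.mem_filter, Finset.mem_univ, true_and] at hx ⊢; exact hx
  · intro x _ y _ hxy; exact eqv.injective hxy
  · intro y hy
    simp only [Finset.mem_filter, Finset.mem_univ, true_and] at hy
    exact ⟨eqv.symm y, by simp [hy], by simp⟩

lemma inf'_equiv [Nonempty α] [Nonempty β] (eqv : α ≃ β) (f : β → ℕ) :
    (Finset.univ.inf' Finset.univ_nonempty fun x => f (eqv x))
      = Finset.univ.inf' Finset.univ_nonempty f := by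
  apply le_antisymm
  · apply Finset.le_inf'
    intro y _
    have := Finset.inf'_le (fun x => f (eqv x)) (Finset.mem_univ (eqv.symm y))
    rwa [Equiv.apply_symm_apply] at this
  · apply Finset.le_inf'
    intro x _
    exact Finset.inf'_le f (Finset.mem_univ (eqv x))
end helpers

set_option maxHeartbeats 1000000 in
lemma decomp_of_partition (gr : (Fin n → ℤ) → Submodule K M) [DirectSum.Decomposition gr]
    (hsmul : GradedSMul gr) {g : Fin n → ℤ} (hg : (0 : Fin n → ℤ) ≤ g)
    (hM : PosDetermined gr g) {r : ℕ} (a b : Fin (r+1) → Fin n → ℤ)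
    (hP : IsHilbertPartition gr g a b) :
    ∃ (k : ℕ) (Z : Fin (k+1) → Finset (Fin n)) (s : Fin (k+1) → Fin n → ℤ),
      IsHilbertDecomp gr Z s ∧
      (Finset.univ.inf' Finset.univ_nonempty fun i => (Z i).card)
        = Finset.univ.inf' Finset.univ_nonempty fun i => rho g (b i) := by
  classical
  set ι := Σ i : Fin (r+1), {c : Fin n → ℤ // c ∈ Gset g (a i) (b i)} with hι
  have hmema : ∀ i, a i ∈ Gset g (a i) (b i) := by
    intro i
    exact Finset.mem_filter.2 ⟨Finset.mem_Icc.2 ⟨le_refl _, (hP.1 i).2.1⟩, fun j _ => rfl⟩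
  have : Nonempty ι := ⟨⟨0, ⟨a 0, hmema 0⟩⟩⟩
  -- the decomposition data over ι
  set Z' : ι → Finset (Fin n) := fun p => Zset g (b p.1) with hZ'
  set s' : ι → Fin n → ℤ := fun p => (p.2 : Fin n → ℤ) with hs'
  have hdec : IsHilbertDecomp gr Z' s' := by
    intro e
    by_cases he : (0 : Fin n → ℤ) ≤ e
    · -- main case
      set e' : Fin n → ℤ := e ⊓ g with he'
      have h0e' : (0 : Fin n → ℤ) ≤ e' := le_inf he hg
      have he'g : e' ≤ g := inf_le_right
      have hrank : Module.rank K (gr e') = Module.rank K (gr e) :=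
        rank_inf_aux gr hsmul hg hM _ e he (le_refl _)
      rw [← hrank, hP.2 e' h0e' he'g]
      norm_cast
      have hmem : ∀ i : Fin (r+1), (∀ j, a i j ≤ e' j) → (∀ j, e' j ≤ b i j) →
          (fun j => if b i j = g j then a i j else e j) ∈ Gset g (a i) (b i) := by
        intro i h1 h2
        obtain ⟨ha0, hab, hbg⟩ := hP.1 i
        refine Finset.mem_filter.2 ⟨Finset.mem_Icc.2 ⟨fun j => ?_, fun j => ?_⟩,
          fun j hj => by simp [hj]⟩
        · have h1j : a i j ≤ e j ⊓ g j := h1 j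
          show a i j ≤ (if b i j = g j then a i j else e j)
          by_cases hj : b i j = g j
          · rw [if_pos hj]
          · rw [if_neg hj]
            omega
        · have h2j : e j ⊓ g j ≤ b i j := h2 j
          have hbgj : b i j ≤ g j := hbg j
          show (if b i j = g j then a i j else e j) ≤ b i j
          by_cases hj : b i j = g j
          · rw [if_pos hj]
            exact hab j
          · rw [if_neg hj]
            omega
      refine Finset.card_bij (fun i hi =>
        (⟨i, ⟨fun j => if b i j = g j then a i j else e j,
          hmem i (Finset.mem_filter.1 hi).2.1 (Finset.mem_filter.1 hi).2.2⟩⟩ : ι))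
        ?_ ?_ ?_
      · intro i hi
        obtain ⟨-, h1, h2⟩ := Finset.mem_filter.1 hi
        refine Finset.mem_filter.2 ⟨Finset.mem_univ _, fun j => ?_, fun j hj => ?_⟩
        · have h1j : a i j ≤ e j ⊓ g j := h1 j
          show (if b i j = g j then a i j else e j) ≤ e j
          by_cases hjg : b i j = g j
          · simp only [hjg, if_true]; omega
          · simp [hjg]
        · have hjz : ¬ b i j = g j := by
            simpa [Z', Zset] using hj
          show e j = if b i j = g j then a i j else e j
          simp [hjz]
      · intro i1 hi1 i2 hi2 heq
        exact congrArg Sigma.fst heq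
      · rintro ⟨i, c, hc⟩ hp
        obtain ⟨-, h1, h2⟩ := Finset.mem_filter.1 hp
        obtain ⟨hicc, hgp⟩ := Finset.mem_filter.1 hc
        obtain ⟨hac, hcb⟩ := Finset.mem_Icc.1 hicc
        obtain ⟨ha0, hab, hbg⟩ := hP.1 i
        have hifilter : i ∈ (Finset.univ : Finset (Fin (r+1))).filter
            (fun i => (∀ j, a i j ≤ e' j) ∧ (∀ j, e' j ≤ b i j)) := by
          refine Finset.mem_filter.2 ⟨Finset.mem_univ _, fun j => ?_, fun j => ?_⟩
          all_goals {
            have hacj : a i j ≤ c j := hac j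
            have hcbj : c j ≤ b i j := hcb j
            have hbgj : b i j ≤ g j := hbg j
            have h1j : c j ≤ e j := h1 j
            show _
            by_cases hjg : b i j = g j
            · have := hgp j hjg
              simp only [Pi.inf_apply, e']
              omega
            · have h2j : e j = c j := h2 j (by simpa [Z', Zset] using hjg)
              simp only [Pi.inf_apply, e']
              omega }
        refine ⟨i, hifilter, ?_⟩
        refine congrArg (Sigma.mk i) (Subtype.ext (funext fun j => ?_))
        by_cases hjg : b i j = g j
        · simp only [hjg, if_true]
          exact (hgp j hjg).symm
        · simp only [hjg, if_false]
          exact h2 j (by simpa [Z', Zset] using hjg)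
    · have hbot : gr e = ⊥ := hM.1 e he
      rw [hbot]
      have h0 : ((Finset.univ : Finset ι).filter
          fun p => (∀ j, s' p j ≤ e j) ∧ (∀ j, j ∉ Z' p → e j = s' p j)) = ∅ := by
        apply Finset.filter_false_of_mem
        rintro ⟨i, c, hc⟩ _ ⟨h1, _⟩
        apply he
        intro j
        simp only [Gset, Finset.mem_filter, Finset.mem_Icc] at hc
        have h0a : (0:ℤ) ≤ a i j := (hP.1 i).1 j
        have h2 : a i j ≤ c j := hc.1.1 j
        have h3 : c j ≤ e j := h1 j
        show (0:ℤ) ≤ e j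
        omega
      rw [h0]
      simp
  -- transfer to Fin (k+1)
  have hcard : 0 < Fintype.card ι := Fintype.card_pos
  obtain ⟨k, hk⟩ : ∃ k, Fintype.card ι = k + 1 :=
    ⟨Fintype.card ι - 1, by omega⟩
  have eqv : Fin (k+1) ≃ ι := hk ▸ (Fintype.equivFin ι).symm
  refine ⟨k, Z' ∘ eqv, s' ∘ eqv, ?_, ?_⟩
  · intro c
    rw [hdec c]
    norm_cast
    exact (filter_card_equiv eqv _).symm
  · have h1 : (Finset.univ.inf' Finset.univ_nonempty fun i => ((Z' ∘ eqv) i).card)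
        = Finset.univ.inf' Finset.univ_nonempty fun p : ι => (Z' p).card :=
      inf'_equiv eqv (fun p : ι => (Z' p).card)
    rw [h1]
    apply le_antisymm
    · apply Finset.le_inf'
      intro i _
      have := Finset.inf'_le (fun p : ι => (Z' p).card)
        (Finset.mem_univ (⟨i, ⟨a i, hmema i⟩⟩ : ι))
      exact this
    · apply Finset.le_inf'
      rintro ⟨i, c, hc⟩ _
      exact Finset.inf'_le (fun i => rho g (b i)) (Finset.mem_univ i)

lemma exists_gr_ne_bot (gr : (Fin n → ℤ) → Submodule K M) [DirectSum.Decomposition gr]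
    [Nontrivial M] : ∃ c, gr c ≠ ⊥ := by
  classical
  by_contra h
  simp only [ne_eq, not_exists, not_not] at h
  obtain ⟨x, hx⟩ := exists_ne (0 : M)
  apply hx
  rw [← DirectSum.sum_support_decompose gr x]
  apply Finset.sum_eq_zero
  intro c _
  have hmem : ((DirectSum.decompose gr x) c : M) ∈ gr c := ((DirectSum.decompose gr x) c).2
  exact (Submodule.eq_bot_iff _).1 (h c) _ hmem

lemma partition_of_decomp (gr : (Fin n → ℤ) → Submodule K M) [DirectSum.Decomposition gr]
    (hsmul : GradedSMul gr) {g : Fin n → ℤ} (hg : (0 : Fin n → ℤ) ≤ g)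
    (hM : PosDetermined gr g) [Nontrivial M]
    {k : ℕ} (Z : Fin (k+1) → Finset (Fin n)) (s : Fin (k+1) → Fin n → ℤ)
    (hD : IsHilbertDecomp gr Z s) :
    ∃ (r : ℕ) (a b : Fin (r+1) → Fin n → ℤ), IsHilbertPartition gr g a b ∧
      (Finset.univ.inf' Finset.univ_nonempty fun i => (Z i).card)
        ≤ Finset.univ.inf' Finset.univ_nonempty fun i => rho g (b i) := by
  classical
  have hs0 : ∀ i, (0 : Fin n → ℤ) ≤ s i := by
    intro i
    by_contra hneg
    have hbot := hM.1 (s i) hneg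
    have h := hD (s i)
    rw [hbot, rank_bot] at h
    have h' : ((Finset.univ : Finset (Fin (k+1))).filter
        fun i' => (∀ j, s i' j ≤ s i j) ∧ (∀ j, j ∉ Z i' → s i j = s i' j)).card = 0 := by
      have := h.symm
      exact_mod_cast this
    rw [Finset.card_eq_zero] at h'
    have : i ∈ ((Finset.univ : Finset (Fin (k+1))).filter
        fun i' => (∀ j, s i' j ≤ s i j) ∧ (∀ j, j ∉ Z i' → s i j = s i' j)) :=
      Finset.mem_filter.2 ⟨Finset.mem_univ _, fun j => le_refl _, fun j _ => rfl⟩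
    rw [h'] at this
    simp at this
  set ι := {i : Fin (k+1) // s i ≤ g} with hι
  have hne : Nonempty ι := by
    obtain ⟨c, hc⟩ := exists_gr_ne_bot gr
    have hc0 : (0 : Fin n → ℤ) ≤ c := by
      by_contra hneg
      exact hc (hM.1 c hneg)
    have hrank : Module.rank K (gr (c ⊓ g)) = Module.rank K (gr c) :=
      rank_inf_aux gr hsmul hg hM _ c hc0 (le_refl _)
    have hrne : Module.rank K (gr (c ⊓ g)) ≠ 0 := by
      rw [hrank]
      rw [ne_eq, Submodule.rank_eq_zero]
      exact hc
    have h := hD (c ⊓ g)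
    have hcard : ((Finset.univ : Finset (Fin (k+1))).filter
        fun i => (∀ j, s i j ≤ (c ⊓ g) j) ∧ (∀ j, j ∉ Z i → (c ⊓ g) j = s i j)).card ≠ 0 := by
      intro h0
      rw [h, h0] at hrne
      simp at hrne
    obtain ⟨i, hi⟩ := Finset.card_pos.1 (Nat.pos_of_ne_zero hcard)
    obtain ⟨-, h1, -⟩ := Finset.mem_filter.1 hi
    refine ⟨⟨i, fun j => ?_⟩⟩
    have h1j : s i j ≤ min (c j) (g j) := h1 j
    exact h1j.trans (min_le_right _ _)
  set A : ι → Fin n → ℤ := fun i => s i.1 with hA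
  set B : ι → Fin n → ℤ := fun i j => if j ∈ Z i.1 then g j else s i.1 j with hB
  have hbounds : ∀ i : ι, (0 : Fin n → ℤ) ≤ A i ∧ A i ≤ B i ∧ B i ≤ g := by
    intro i
    refine ⟨hs0 i.1, fun j => ?_, fun j => ?_⟩
    · show s i.1 j ≤ if j ∈ Z i.1 then g j else s i.1 j
      by_cases hj : j ∈ Z i.1
      · rw [if_pos hj]; exact i.2 j
      · rw [if_neg hj]
    · show (if j ∈ Z i.1 then g j else s i.1 j) ≤ g j
      by_cases hj : j ∈ Z i.1
      · rw [if_pos hj]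
      · rw [if_neg hj]; exact i.2 j
  have hcount : ∀ c : Fin n → ℤ, (0 : Fin n → ℤ) ≤ c → c ≤ g →
      Module.rank K (gr c) = (((Finset.univ : Finset ι).filter
        fun i => (∀ j, A i j ≤ c j) ∧ (∀ j, c j ≤ B i j)).card : Cardinal) := by
    intro c h0c hcg
    rw [hD c]
    norm_cast
    have hig : ∀ i : Fin (k+1), (∀ j, s i j ≤ c j) → s i ≤ g :=
      fun i h1 j => le_trans (h1 j) (hcg j)
    refine Finset.card_bij (fun (i : Fin (k+1)) hi =>
      (⟨i, hig i (Finset.mem_filter.1 hi).2.1⟩ : ι)) ?_ ?_ ?_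
    · intro i hi
      obtain ⟨-, h1, h2⟩ := Finset.mem_filter.1 hi
      refine Finset.mem_filter.2 ⟨Finset.mem_univ _, h1, fun j => ?_⟩
      show c j ≤ if j ∈ Z i then g j else s i j
      by_cases hj : j ∈ Z i
      · rw [if_pos hj]; exact hcg j
      · rw [if_neg hj, ← h2 j hj]
    · intro i1 hi1 i2 hi2 heq
      simpa using congrArg Subtype.val heq
    · rintro ⟨i, hig'⟩ hp
      obtain ⟨-, h1, h2⟩ := Finset.mem_filter.1 hp
      have h1' : ∀ j, s i j ≤ c j := h1
      have hifilter : i ∈ (Finset.univ : Finset (Fin (k+1))).filter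
          (fun i => (∀ j, s i j ≤ c j) ∧ (∀ j, j ∉ Z i → c j = s i j)) := by
        refine Finset.mem_filter.2 ⟨Finset.mem_univ _, h1', fun j hj => ?_⟩
        have h2j : c j ≤ if j ∈ Z i then g j else s i j := h2 j
        rw [if_neg hj] at h2j
        exact le_antisymm h2j (h1' j)
      exact ⟨i, hifilter, Subtype.ext rfl⟩
  -- reindex
  have hcard : 0 < Fintype.card ι := Fintype.card_pos
  obtain ⟨r, hr⟩ : ∃ r, Fintype.card ι = r + 1 := ⟨Fintype.card ι - 1, by omega⟩
  have eqv : Fin (r+1) ≃ ι := hr ▸ (Fintype.equivFin ι).symm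
  refine ⟨r, A ∘ eqv, B ∘ eqv, ⟨fun i => hbounds (eqv i), fun c h0c hcg => ?_⟩, ?_⟩
  · rw [hcount c h0c hcg]
    norm_cast
    exact (filter_card_equiv eqv
      (fun i => (∀ j, A i j ≤ c j) ∧ (∀ j, c j ≤ B i j))).symm
  · have h1 : (Finset.univ.inf' Finset.univ_nonempty fun i : Fin (r+1) => rho g ((B ∘ eqv) i))
        = Finset.univ.inf' Finset.univ_nonempty fun p : ι => rho g (B p) :=
      inf'_equiv eqv (fun p : ι => rho g (B p))
    rw [h1]
    apply Finset.le_inf'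
    intro p _
    have hsub : Z p.1 ⊆ Zset g (B p) := by
      intro j hj
      simp only [Zset, Finset.mem_filter, Finset.mem_univ, true_and, hB]
      rw [if_pos hj]
    calc (Finset.univ.inf' Finset.univ_nonempty fun i => (Z i).card)
        ≤ (Z p.1).card := Finset.inf'_le _ (Finset.mem_univ p.1)
      _ ≤ rho g (B p) := Finset.card_le_card hsub

lemma exists_partition (gr : (Fin n → ℤ) → Submodule K M) [DirectSum.Decomposition gr]
    (hsmul : GradedSMul gr) [Module.Finite (MvPolynomial (Fin n) K) M] [Nontrivial M]
    {g : Fin n → ℤ} (hg : (0 : Fin n → ℤ) ≤ g) (hM : PosDetermined gr g) :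
    ∃ (r : ℕ) (a b : Fin (r+1) → Fin n → ℤ), IsHilbertPartition gr g a b := by
  classical
  set ι := Σ d : (Finset.Icc (0 : Fin n → ℤ) g), Fin (Module.finrank K (gr (d : Fin n → ℤ)))
    with hι
  have hne : Nonempty ι := by
    obtain ⟨c, hc⟩ := exists_gr_ne_bot gr
    have hc0 : (0 : Fin n → ℤ) ≤ c := by
      by_contra hneg; exact hc (hM.1 c hneg)
    have hrank : Module.rank K (gr (c ⊓ g)) = Module.rank K (gr c) :=
      rank_inf_aux gr hsmul hg hM _ c hc0 (le_refl _)
    have hne' : gr (c ⊓ g) ≠ ⊥ := by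
      intro hbot
      rw [hbot, rank_bot] at hrank
      exact hc (Submodule.rank_eq_zero.1 hrank.symm)
    haveI : FiniteDimensional K (gr (c ⊓ g)) := finiteDim_gr gr hsmul _
    have hfr : Module.finrank K (gr (c ⊓ g)) ≠ 0 := by
      rw [ne_eq, Submodule.finrank_eq_zero]
      exact hne'
    have hmem : (c ⊓ g) ∈ Finset.Icc (0 : Fin n → ℤ) g :=
      Finset.mem_Icc.2 ⟨le_inf hc0 hg, inf_le_right⟩
    exact ⟨⟨⟨c ⊓ g, hmem⟩, ⟨0, Nat.pos_of_ne_zero hfr⟩⟩⟩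
  have hcount : ∀ c : Fin n → ℤ, (0 : Fin n → ℤ) ≤ c → c ≤ g →
      Module.rank K (gr c) = (((Finset.univ : Finset ι).filter
        fun p => (∀ j, (p.1 : Fin n → ℤ) j ≤ c j) ∧
          (∀ j, c j ≤ (p.1 : Fin n → ℤ) j)).card : Cardinal) := by
    intro c h0c hcg
    haveI : FiniteDimensional K (gr c) := finiteDim_gr gr hsmul c
    rw [← Module.finrank_eq_rank K (gr c)]
    norm_cast
    have hmemc : c ∈ Finset.Icc (0 : Fin n → ℤ) g := Finset.mem_Icc.2 ⟨h0c, hcg⟩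
    rw [← Finset.card_fin (Module.finrank K (gr c))]
    refine Finset.card_bij (fun (t : Fin (Module.finrank K (gr c))) _ =>
      (⟨⟨c, hmemc⟩, t⟩ : ι)) ?_ ?_ ?_
    · intro t _
      exact Finset.mem_filter.2 ⟨Finset.mem_univ _, fun j => le_refl _, fun j => le_refl _⟩
    · intro t1 _ t2 _ h
      have := (Sigma.mk.inj_iff.1 h).2
      exact eq_of_heq this
    · rintro ⟨⟨d, hd⟩, t⟩ hp
      obtain ⟨-, h1, h2⟩ := Finset.mem_filter.1 hp
      have hdc : d = c := funext fun j => le_antisymm (h1 j) (h2 j)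
      subst hdc
      exact ⟨t, Finset.mem_univ _, rfl⟩
  have hcard : 0 < Fintype.card ι := Fintype.card_pos
  obtain ⟨r, hr⟩ : ∃ r, Fintype.card ι = r + 1 := ⟨Fintype.card ι - 1, by omega⟩
  have eqv : Fin (r+1) ≃ ι := hr ▸ (Fintype.equivFin ι).symm
  refine ⟨r, (fun i => ((eqv i).1 : Fin n → ℤ)), (fun i => ((eqv i).1 : Fin n → ℤ)), ?_, ?_⟩
  · intro i
    have := Finset.mem_Icc.1 (eqv i).1.2
    exact ⟨this.1, le_refl _, this.2⟩
  · intro c h0c hcg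
    rw [hcount c h0c hcg]
    norm_cast
    exact (filter_card_equiv eqv
      (fun p : ι => (∀ j, (p.1 : Fin n → ℤ) j ≤ c j) ∧
        (∀ j, c j ≤ (p.1 : Fin n → ℤ) j))).symm


/-- **Corollary.**  For a finitely generated multigraded `R`-module `M` which is
positively `g`-determined, `Hdepth M` is the maximum over all Hilbert partitions
`𝔓` of `H_M(X)_{⪯g}` of the depth of the induced Hilbert decomposition `𝔇(𝔓)`
(which equals `min_i ρ(bⁱ)`); in particular some Hilbert partition
`𝔓 : H_M(X)_{⪯g} = Σᵢ Q[aⁱ,bⁱ](X)` satisfies `Hdepth M = min_i ρ(bⁱ)`. -/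
theorem hdepth_eq_max_over_hilbertPartitions
    (gr : (Fin n → ℤ) → Submodule K M) [DirectSum.Decomposition gr]
    (hsmul : GradedSMul gr) [Module.Finite (MvPolynomial (Fin n) K) M]
    [Nontrivial M]
    (g : Fin n → ℤ) (hg : (0 : Fin n → ℤ) ≤ g)
    (hM : PosDetermined gr g) :
    hdepth gr
        = sSup {d | ∃ (r : ℕ) (a b : Fin (r + 1) → Fin n → ℤ),
            IsHilbertPartition gr g a b ∧
              d = Finset.univ.inf' Finset.univ_nonempty fun i => rho g (b i)} ∧
      ∃ (r : ℕ) (a b : Fin (r + 1) → Fin n → ℤ),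
        IsHilbertPartition gr g a b ∧
          hdepth gr = Finset.univ.inf' Finset.univ_nonempty fun i => rho g (b i) := by
  classical
  set SD := {d | ∃ (k : ℕ) (Z : Fin (k + 1) → Finset (Fin n)) (s : Fin (k + 1) → Fin n → ℤ),
    IsHilbertDecomp gr Z s ∧
      d = Finset.univ.inf' Finset.univ_nonempty fun i => (Z i).card} with hSD
  set SP := {d | ∃ (r : ℕ) (a b : Fin (r + 1) → Fin n → ℤ),
    IsHilbertPartition gr g a b ∧
      d = Finset.univ.inf' Finset.univ_nonempty fun i => rho g (b i)} with hSP
  have hSDne : SD.Nonempty := by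
    obtain ⟨r₀, a₀, b₀, hP₀⟩ := exists_partition gr hsmul hg hM
    obtain ⟨k, Z, s, hD, hEq⟩ := decomp_of_partition gr hsmul hg hM a₀ b₀ hP₀
    exact ⟨_, k, Z, s, hD, rfl⟩
  have hSDbdd : BddAbove SD := by
    refine ⟨n, ?_⟩
    rintro d ⟨k, Z, s, hD, rfl⟩
    calc (Finset.univ.inf' Finset.univ_nonempty fun i => (Z i).card)
        ≤ (Z 0).card := Finset.inf'_le _ (Finset.mem_univ 0)
      _ ≤ n := by simpa using Finset.card_le_univ (Z 0)
  have hd_mem : hdepth gr ∈ SD := Nat.sSup_mem hSDne hSDbdd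
  obtain ⟨k, Z, s, hD, hEq⟩ := hd_mem
  obtain ⟨r₁, a₁, b₁, hP₁, hle⟩ := partition_of_decomp gr hsmul hg hM Z s hD
  have hUB : ∀ p ∈ SP, p ≤ hdepth gr := by
    rintro p ⟨r, a, b, hP, rfl⟩
    obtain ⟨k', Z', s', hD', hEq'⟩ := decomp_of_partition gr hsmul hg hM a b hP
    have : (Finset.univ.inf' Finset.univ_nonempty fun i => rho g (b i)) ∈ SD :=
      ⟨k', Z', s', hD', hEq'.symm⟩
    exact le_csSup hSDbdd this
  set d₁ := Finset.univ.inf' Finset.univ_nonempty fun i => rho g (b₁ i) with hd₁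
  have hd₁SP : d₁ ∈ SP := ⟨r₁, a₁, b₁, hP₁, rfl⟩
  have hge : hdepth gr ≤ d₁ := hEq ▸ hle
  have heq₁ : d₁ = hdepth gr := le_antisymm (hUB d₁ hd₁SP) hge
  constructor
  · apply le_antisymm
    · rw [← heq₁]
      exact le_csSup ⟨hdepth gr, hUB⟩ hd₁SP
    · exact csSup_le ⟨d₁, hd₁SP⟩ hUB
  · exact ⟨r₁, a₁, b₁, hP₁, heq₁.symm⟩
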